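/- Let h : 𝕋 → 𝕋 be a continuous non-decreasing degree-one map and g an orientation-preserving circle homeomorphism satisfying h ∘ g = h + ρ for some constant ρ. Then the formula μ([0,θ]) = h(θ) − h(0) (interpreted via lifts) defines a g-invariant Borel probability measure on 𝕋. -/

import Mathlib

open MeasureTheory Set

private lemma lift_int' {F : ℝ → ℝ} (h : ∀ x, F (x + 1) = F x + 1) :
    ∀ (n : ℤ) (x : ℝ), F (x + n) = F x + n := by
  intro n
  induction n using Int.induction_on with
  | zero => simp
  | succ n ih =>
      intro x
      push_cast at ih ⊢
      have e1 : x + ((n:ℝ) + 1) = (x + n) + 1 := by ring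
      rw [e1, h (x + n), ih x]; ring
  | pred n ih =>
      intro x
      push_cast at ih ⊢
      have e1 : x + (-(n:ℝ) - 1) + 1 = x + -(n:ℝ) := by ring
      have h2 := h (x + (-(n:ℝ) - 1))
      rw [e1, ih x] at h2
      linarith

private lemma coe_add_int' (x : ℝ) (m : ℤ) : ((x + m : ℝ) : AddCircle (1:ℝ)) = x := by
  have hm : ((m : ℝ) : AddCircle (1:ℝ)) = 0 := by
    rw [QuotientAddGroup.eq_zero_iff]
    exact ⟨m, by simp⟩
  rw [show ((x + m : ℝ) : AddCircle (1:ℝ)) = (x : AddCircle (1:ℝ)) + (m : ℝ) from rfl, hm, add_zero]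

private lemma map_shift' {ν : Measure ℝ} (hν : ∀ n : ℤ, ν.map (fun x => x + (n:ℝ)) = ν)
    (m : ℤ) (s : Set ℝ) (hs : MeasurableSet s) :
    (ν.restrict ((fun x => x - (m:ℝ)) ⁻¹' s)).map (fun t : ℝ => (t : AddCircle (1:ℝ)))
      = (ν.restrict s).map (fun t : ℝ => (t : AddCircle (1:ℝ))) := by
  have mp : Measurable (fun t : ℝ => (t : AddCircle (1:ℝ))) :=
    (AddCircle.measurable_mk' : _)
  have hmeas : Measurable (fun x : ℝ => x - (m:ℝ)) := measurable_id.sub_const _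
  have hm : ν.map (fun x => x - (m:ℝ)) = ν := by
    have := hν (-m)
    simpa [sub_eq_add_neg] using this
  conv_rhs => rw [← hm]
  rw [Measure.restrict_map hmeas hs, Measure.map_map mp hmeas]
  congr 1
  funext x
  show (x : AddCircle (1:ℝ)) = ((x - m : ℝ) : AddCircle (1:ℝ))
  have := coe_add_int' x (-m)
  push_cast at this
  rw [← sub_eq_add_neg] at this
  exact this.symm

private lemma map_restrict_fd' {ν : Measure ℝ} (hν : ∀ n : ℤ, ν.map (fun x => x + (n:ℝ)) = ν)
    (c : ℝ) :
    (ν.restrict (Ico c (c+1))).map (fun t : ℝ => (t : AddCircle (1:ℝ)))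
      = (ν.restrict (Ico 0 1)).map (fun t : ℝ => (t : AddCircle (1:ℝ))) := by
  have mp : Measurable (fun t : ℝ => (t : AddCircle (1:ℝ))) :=
    (AddCircle.measurable_mk' : _)
  set n : ℤ := ⌈c⌉ with hn
  have h1 : c ≤ n := Int.le_ceil c
  have h2 : (n:ℝ) < c + 1 := Int.ceil_lt_add_one c
  set d : ℝ := c + 1 - n with hd
  have hd0 : 0 < d := by simp only [hd]; linarith
  have hd1 : d ≤ 1 := by simp only [hd]; linarith
  have split1 : Ico c (c+1) = Ico c (n:ℝ) ∪ Ico (n:ℝ) (c+1) :=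
    (Ico_union_Ico_eq_Ico h1 h2.le).symm
  have dis1 : Disjoint (Ico c (n:ℝ)) (Ico (n:ℝ) (c+1)) := Ico_disjoint_Ico_same
  have e1 : Ico c (n:ℝ) = (fun x => x - (((n-1 : ℤ)):ℝ)) ⁻¹' (Ico d 1) := by
    ext x
    simp only [mem_Ico, mem_preimage, hd]
    push_cast
    constructor <;> rintro ⟨a, b⟩ <;> constructor <;> linarith
  have e2 : Ico (n:ℝ) (c+1) = (fun x => x - ((n : ℤ):ℝ)) ⁻¹' (Ico 0 d) := by
    ext x
    simp only [mem_Ico, mem_preimage, hd]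
    constructor <;> rintro ⟨a, b⟩ <;> constructor <;> linarith
  rw [split1, Measure.restrict_union dis1 measurableSet_Ico, Measure.map_add _ _ mp,
      e1, e2, map_shift' hν _ _ measurableSet_Ico, map_shift' hν _ _ measurableSet_Ico,
      ← Measure.map_add _ _ mp, add_comm,
      ← Measure.restrict_union Ico_disjoint_Ico_same measurableSet_Ico,
      Ico_union_Ico_eq_Ico hd0.le hd1]

theorem stmt4 (g : AddCircle (1:ℝ) → AddCircle (1:ℝ)) (G H : ℝ → ℝ) (ρ : ℝ)
    (hg_cont : Continuous g) (hg_bij : Function.Bijective g)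
    (hG_cont : Continuous G) (hG_mono : StrictMono G)
    (hG_lift : ∀ x, G (x + 1) = G x + 1)
    (hproj : ∀ x : ℝ, g (x : AddCircle (1:ℝ)) = ((G x : ℝ) : AddCircle (1:ℝ)))
    (hH_cont : Continuous H) (hH_mono : Monotone H)
    (hH_lift : ∀ x, H (x + 1) = H x + 1)
    (hsemi : ∀ x, H (G x) = H x + ρ) :
    ∃ μ : Measure (AddCircle (1:ℝ)), IsProbabilityMeasure μ ∧ μ.map g = μ ∧
      ∀ Θ ∈ Set.Ico (0:ℝ) 1,
        (μ ((fun t : ℝ => (t : AddCircle (1:ℝ))) '' Set.Icc 0 Θ)).toReal = H Θ - H 0 := by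
  haveI : Fact ((0:ℝ) < 1) := ⟨one_pos⟩
  set proj : ℝ → AddCircle (1:ℝ) := fun t => (t : AddCircle (1:ℝ)) with hprojdef
  have mp : Measurable proj := AddCircle.measurable_mk'
  have pc : Continuous proj := AddCircle.continuous_mk' 1
  -- Stieltjes function from H
  set F : StieltjesFunction ℝ := ⟨H, hH_mono, fun x => (hH_cont.continuousAt).continuousWithinAt⟩
    with hF
  have hFH : ∀ x, F x = H x := fun x => rfl
  set ν : Measure ℝ := F.measure with hν
  have hHz := lift_int' hH_lift
  have hGz := lift_int' hG_lift
  have hleft : ∀ x : ℝ, Function.leftLim H x = H x := fun x =>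
    leftLim_eq_of_tendsto
      ((hH_cont.tendsto x).mono_left nhdsWithin_le_nhds)
  -- translation invariance of ν
  have htrans : ∀ n : ℤ, ν.map (fun x => x + (n:ℝ)) = ν := by
    intro n
    refine Measure.ext_of_Ioc' _ _ ?_ ?_ <;> intro a b hab <;>
      rw [Measure.map_apply (measurable_add_const _) measurableSet_Ioc,
        show (fun x => x + (n:ℝ)) ⁻¹' Ioc a b = Ioc (a - n) (b - n) by
          ext x; simp only [mem_preimage, mem_Ioc]; constructor <;> rintro ⟨u, v⟩ <;>
            exact ⟨by linarith, by linarith⟩]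
    · rw [F.measure_Ioc]; exact ENNReal.ofReal_ne_top
    · rw [F.measure_Ioc, F.measure_Ioc]
      congr 1
      have hb := hHz n (b - n)
      have ha := hHz n (a - n)
      simp only [sub_add_cancel] at hb ha
      simp only [hFH]
      linarith
  -- surjectivity of G
  have hGsurj : Function.Surjective G := by
    intro y
    obtain ⟨n, hn⟩ := exists_nat_ge (|y - G 0| )
    have h1 : G (0 + ((-(n:ℤ) : ℤ)):ℝ) = G 0 + ((-(n:ℤ) : ℤ):ℝ) := hGz _ _
    have h2 : G (0 + ((n:ℤ):ℝ)) = G 0 + ((n:ℤ):ℝ) := hGz _ _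
    push_cast at h1 h2
    rw [zero_add] at h1 h2
    obtain ⟨hl, hr⟩ := abs_le.mp hn
    have hy1 : G (-(n:ℝ)) ≤ y := by rw [h1]; linarith
    have hy2 : y ≤ G (n:ℝ) := by rw [h2]; linarith
    obtain ⟨x, _, hx⟩ := intermediate_value_Icc (neg_le_self (Nat.cast_nonneg n) : -(n:ℝ) ≤ n)
      hG_cont.continuousOn ⟨hy1, hy2⟩
    exact ⟨x, hx⟩
  -- invariance of ν under G
  have hmapG : ν.map G = ν := by
    refine Measure.ext_of_Ioc' _ _ ?_ ?_ <;> intro a b hab <;>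
      obtain ⟨a', ha'⟩ := hGsurj a <;> obtain ⟨b', hb'⟩ := hGsurj b <;>
      have hpre : G ⁻¹' Ioc a b = Ioc a' b' := by
        ext x
        simp only [mem_preimage, mem_Ioc, ← ha', ← hb', hG_mono.lt_iff_lt, hG_mono.le_iff_le]
    · rw [Measure.map_apply hG_cont.measurable measurableSet_Ioc, hpre, F.measure_Ioc]
      exact ENNReal.ofReal_ne_top
    · rw [Measure.map_apply hG_cont.measurable measurableSet_Ioc, hpre,
        F.measure_Ioc, F.measure_Ioc]
      congr 1
      have ha2 := hsemi a'; rw [ha'] at ha2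
      have hb2 := hsemi b'; rw [hb'] at hb2
      simp only [hFH]
      linarith
  refine ⟨(ν.restrict (Ico 0 1)).map proj, ?_, ?_, ?_⟩
  · constructor
    rw [Measure.map_apply mp MeasurableSet.univ, preimage_univ, Measure.restrict_apply_univ,
      F.measure_Ico]
    have h1 : H 1 = H 0 + 1 := by have := hH_lift 0; rwa [zero_add] at this
    have : Function.leftLim (F : ℝ → ℝ) 1 - Function.leftLim (F : ℝ → ℝ) 0 = 1 := by
      show Function.leftLim H 1 - Function.leftLim H 0 = 1
      rw [hleft, hleft]; linarith
    rw [this]; simp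
  · -- invariance
    rw [Measure.map_map hg_cont.measurable mp,
      show g ∘ proj = proj ∘ G from funext hproj,
      ← Measure.map_map mp hG_cont.measurable]
    have hG1 : G 1 = G 0 + 1 := by have := hG_lift 0; rwa [zero_add] at this
    have hIpre : Ico (0:ℝ) 1 = G ⁻¹' (Ico (G 0) (G 0 + 1)) := by
      ext x
      simp only [mem_Ico, mem_preimage, ← hG1]
      constructor
      · rintro ⟨a, b⟩
        exact ⟨hG_mono.monotone a, hG_mono b⟩
      · rintro ⟨a, b⟩
        exact ⟨(hG_mono.le_iff_le).mp a, (hG_mono.lt_iff_lt).mp b⟩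
    nth_rw 1 [hIpre]
    rw [← Measure.restrict_map hG_cont.measurable measurableSet_Ico, hmapG]
    exact map_restrict_fd' htrans (G 0)
  · intro Θ hΘ
    have hA : MeasurableSet (proj '' Icc 0 Θ) := (isCompact_Icc.image pc).measurableSet
    rw [Measure.map_apply mp hA, Measure.restrict_apply (mp hA)]
    have hset : proj ⁻¹' (proj '' Icc 0 Θ) ∩ Ico 0 1 = Icc 0 Θ := by
      ext x
      constructor
      · rintro ⟨⟨s, hs, hsx⟩, hx⟩
        have hs' : s ∈ Ico (0:ℝ) (0 + 1) := ⟨hs.1, by rw [zero_add]; exact lt_of_le_of_lt hs.2 hΘ.2⟩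
        have hx' : x ∈ Ico (0:ℝ) (0 + 1) := by rwa [zero_add]
        have : s = x := (AddCircle.coe_eq_coe_iff_of_mem_Ico hs' hx').mp hsx
        rwa [← this]
      · intro hx
        exact ⟨⟨x, hx, rfl⟩, ⟨hx.1, lt_of_le_of_lt hx.2 hΘ.2⟩⟩
    rw [hset, F.measure_Icc]
    have : F Θ - Function.leftLim (F : ℝ → ℝ) 0 = H Θ - H 0 := by
      show H Θ - Function.leftLim H 0 = H Θ - H 0
      rw [hleft]
    rw [this, ENNReal.toReal_ofReal (by have := hH_mono hΘ.1; linarith)]
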